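/- arXiv:1801.07206 — 3 statements merged into one kernel-verified Lean document; each statement's English description precedes it below -/
import Mathlib

section
/- For any real $c>0$ and $\alpha>0$, suppose $y:[0,\infty)\to[0,\infty)$ is differentiable, satisfies the differential inequality $y'(t) + 2\alpha y(t) - c\, y(t)^{3/2} \le 0$ for all $t\ge 0$, and the initial condition $0 < \sqrt{y(0)} < \alpha/c$. Then for all $t\ge 0$, $y(t) \le \left[\left(\frac{1}{\sqrt{y(0)}} - \frac{c}{2\alpha}\right)e^{\alpha t} + \frac{c}{2\alpha}\right]^{-2} < 4\,y(0)\, e^{-2\alpha t}$. -/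
open Set

private lemma aux_bound (α c d A k U E : ℝ) (hα : 0 < α) (hU : U = A * E + k)
    (hk : k = d / (2 * α)) (hU0 : 0 < U) (hcd : c < d) :
    c * (1 / U ^ 2 * (1 / U)) - 2 * α * (1 / U ^ 2) < -(2 * U ^ 1 * (A * (E * α))) / (U ^ 2) ^ 2 := by
  have hne : U ≠ 0 := hU0.ne'
  have hAE : A * E = U - k := by rw [hU]; ring
  have h2 : 2 * α * k = d := by rw [hk]; field_simp
  have hnum : -(2 * U ^ 1 * (A * (E * α))) = (d - 2 * α * U) * U := by
    rw [pow_one]; linear_combination (-2 * α * U) * hAE + U * h2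
  rw [hnum]
  have hr : (d - 2 * α * U) * U / (U ^ 2) ^ 2 = d / U ^ 3 - 2 * α / U ^ 2 := by
    field_simp
  have hl : c * (1 / U ^ 2 * (1 / U)) - 2 * α * (1 / U ^ 2) = c / U ^ 3 - 2 * α / U ^ 2 := by
    field_simp
  rw [hr, hl]
  have h5 : 0 < (U ^ 3)⁻¹ := by positivity
  have h6 := mul_lt_mul_of_pos_right hcd h5
  simp only [div_eq_mul_inv]
  linarith




/-- Bernoulli-type differential inequality: if `y ≥ 0` is differentiable,
`y' + 2αy - c y^{3/2} ≤ 0` on `[0,∞)` and `0 < √(y 0) < α/c`, then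
`y t ≤ [(1/√(y 0) - c/(2α)) e^{αt} + c/(2α)]⁻²  < 4 y(0) e^{-2αt}`. -/
theorem stmt_5 (c α : ℝ) (hc : 0 < c) (hα : 0 < α) (y : ℝ → ℝ)
    (hy : ∀ t, 0 ≤ t → DifferentiableAt ℝ y t)
    (hpos : ∀ t, 0 ≤ t → 0 ≤ y t)
    (hineq : ∀ t, 0 ≤ t → deriv y t + 2 * α * y t - c * (y t * Real.sqrt (y t)) ≤ 0)
    (h0 : 0 < Real.sqrt (y 0)) (h0' : Real.sqrt (y 0) < α / c) :
    ∀ t, 0 ≤ t →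
      y t ≤ 1 / ((1 / Real.sqrt (y 0) - c / (2 * α)) * Real.exp (α * t) + c / (2 * α)) ^ 2 ∧
      1 / ((1 / Real.sqrt (y 0) - c / (2 * α)) * Real.exp (α * t) + c / (2 * α)) ^ 2
        < 4 * y 0 * Real.exp (-2 * α * t) := by
  set s := Real.sqrt (y 0) with hs
  have hy0 : y 0 = s ^ 2 := by
    rw [hs, Real.sq_sqrt (hpos 0 le_rfl)]
  -- key comparison lemma with parameter d > c
  have key : ∀ d, c < d → 0 < 1 / s - d / (2 * α) → ∀ T, 0 ≤ T →
      y T ≤ 1 / ((1 / s - d / (2 * α)) * Real.exp (α * T) + d / (2 * α)) ^ 2 := by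
    intro d hcd hAd T hT
    set A := 1 / s - d / (2 * α) with hA
    set k := d / (2 * α) with hk
    have hd0 : 0 < d := hc.trans hcd
    have hkpos : 0 < k := by rw [hk]; positivity
    set u : ℝ → ℝ := fun t => A * Real.exp (α * t) + k with hu
    have hupos : ∀ t, 0 < u t := fun t => by
      have := Real.exp_pos (α * t)
      simp only [hu]
      nlinarith [hAd, hkpos]
    have hu' : ∀ t, HasDerivAt u (A * (Real.exp (α * t) * α)) t := by
      intro t
      have h1 : HasDerivAt (fun t : ℝ => α * t) α t := by
        simpa using (hasDerivAt_id t).const_mul α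
      have h2 : HasDerivAt (fun t : ℝ => Real.exp (α * t)) (Real.exp (α * t) * α) t :=
        (Real.hasDerivAt_exp (α * t)).comp t h1
      exact (h2.const_mul A).add_const k
    set B : ℝ → ℝ := fun t => 1 / (u t) ^ 2 with hB
    set B' : ℝ → ℝ := fun t => -(2 * u t ^ 1 * (A * (Real.exp (α * t) * α))) / ((u t) ^ 2) ^ 2
      with hB'
    have hBd : ∀ x, HasDerivAt B (B' x) x := by
      intro x
      have h1 : HasDerivAt (fun t => (u t) ^ 2) (2 * u x ^ 1 * (A * (Real.exp (α * x) * α))) x := by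
        simpa using (hu' x).fun_pow 2
      have h2 := h1.fun_inv (by positivity)
      simp only [hB, hB', one_div]
      convert h2 using 1
    have main : ∀ ⦃x⦄, x ∈ Icc 0 T → y x ≤ B x := by
      apply image_le_of_deriv_right_lt_deriv_boundary
        (f' := fun x => deriv y x) (B := B) (B' := B')
      · intro x hx
        exact ((hy x hx.1).continuousAt).continuousWithinAt
      · intro x hx
        exact ((hy x hx.1).hasDerivAt).hasDerivWithinAt
      · -- y 0 ≤ B 0
        have h8 : u 0 = 1 / s := by simp [hu, hA, hk]
        show y 0 ≤ 1 / (u 0) ^ 2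
        rw [h8, div_pow, one_pow, one_div_one_div, hy0]
      · exact hBd
      · intro x hx hyx
        have hx0 := hx.1
        have hux := hupos x
        have hsq : Real.sqrt (y x) = 1 / u x := by
          rw [hyx]
          simp only [hB]
          rw [one_div, Real.sqrt_inv, Real.sqrt_sq (hux.le), one_div]
        have h1 := hineq x hx0
        have h2 : deriv y x ≤ c * (B x * (1 / u x)) - 2 * α * B x := by
          rw [← hyx, ← hsq]; linarith
        have h3 : c * (B x * (1 / u x)) - 2 * α * B x < B' x := by
          simp only [hB, hB']
          exact aux_bound α c d A k (u x) (Real.exp (α * x)) hα rfl hk hux hcd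
        linarith
    have := main ⟨hT, le_rfl⟩
    simpa [hB] using this
  intro t ht
  set A := 1 / s - c / (2 * α) with hA
  have hcs : c / (2 * α) < 1 / (2 * s) := by
    have hca : s * c < α := (lt_div_iff₀ hc).mp h0'
    rw [div_lt_div_iff₀ (by positivity) (by positivity)]
    nlinarith
  have hAc : 0 < A := by
    have : 1 / (2*s) < 1 / s := by
      rw [div_lt_div_iff₀ (by positivity) h0]; nlinarith
    simp only [hA]; linarith
  constructor
  · -- limit d → c⁺
    have hub : c < 2 * α / s := by
      rw [lt_div_iff₀ h0]
      nlinarith [(lt_div_iff₀ hc).mp h0']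
    have tend : Filter.Tendsto
        (fun d => 1 / ((1 / s - d / (2 * α)) * Real.exp (α * t) + d / (2 * α)) ^ 2)
        (nhdsWithin c (Set.Ioi c))
        (nhds (1 / ((1 / s - c / (2 * α)) * Real.exp (α * t) + c / (2 * α)) ^ 2)) := by
      apply Filter.Tendsto.mono_left _ nhdsWithin_le_nhds
      have hne : ((1 / s - c / (2 * α)) * Real.exp (α * t) + c / (2 * α)) ^ 2 ≠ 0 := by
        have := Real.exp_pos (α * t); positivity
      exact (ContinuousAt.div continuousAt_const (by fun_prop) hne)
    refine ge_of_tendsto tend ?_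
    filter_upwards [Ioo_mem_nhdsGT_of_mem (⟨le_rfl, hub⟩ : c ∈ Ico c (2 * α / s))] with d hd
    have hAd : 0 < 1 / s - d / (2 * α) := by
      have h2 : d * s < 2 * α := (lt_div_iff₀ h0).mp hd.2
      rw [sub_pos, div_lt_div_iff₀ (by positivity) h0]
      nlinarith
    exact key d hd.1 hAd t ht
  · -- strict bound
    have hE : (0:ℝ) < Real.exp (α * t) := Real.exp_pos _
    have hu : Real.exp (α * t) / (2 * s) <
        (1 / s - c / (2 * α)) * Real.exp (α * t) + c / (2 * α) := by
      have h1 : 1 / (2 * s) < 1 / s - c / (2 * α) := by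
        have : 1 / s = 1 / (2 * s) + 1 / (2 * s) := by
          rw [← add_div]
          rw [eq_div_iff (by positivity : (2:ℝ) * s ≠ 0)]
          field_simp
          ring
        linarith [hcs]
      have h2 := mul_lt_mul_of_pos_right h1 hE
      have h3 : 0 < c / (2 * α) := by positivity
      have h4 : Real.exp (α * t) / (2 * s) = 1 / (2 * s) * Real.exp (α * t) := by ring
      linarith
    have hexp : Real.exp (-2 * α * t) = 1 / Real.exp (α * t) ^ 2 := by
      rw [sq, ← Real.exp_add, one_div, ← Real.exp_neg]
      congr 1
      ring
    have hD : 0 < A * Real.exp (α * t) + c / (2 * α) := by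
      exact add_pos (mul_pos hAc hE) (by positivity)
    have h5 : 0 < Real.exp (α * t) / (2 * s) := by positivity
    have h2 : Real.exp (α * t) ^ 2 / (4 * s ^ 2) < (A * Real.exp (α * t) + c / (2 * α)) ^ 2 := by
      have h6 := mul_pos (sub_pos.mpr hu) (add_pos hD h5)
      have h7 : Real.exp (α * t) ^ 2 / (4 * s ^ 2) = (Real.exp (α * t) / (2 * s)) ^ 2 := by
        rw [div_pow]
        ring_nf
      rw [h7]
      nlinarith [h6]
    rw [hexp, hy0]
    calc 1 / (A * Real.exp (α * t) + c / (2 * α)) ^ 2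
        < 1 / (Real.exp (α * t) ^ 2 / (4 * s ^ 2)) := by
          rw [one_div_lt_one_div (pow_pos hD 2) (by positivity)]
          exact h2
      _ = 4 * s ^ 2 * (1 / Real.exp (α * t) ^ 2) := by
          rw [one_div_div]
          ring
end

section
/- Let $A$ be a closed densely defined operator on a Hilbert space $H$ with bounded, symmetric, nonnegative operator $X$ satisfying $A^*X + XA + Y = 0$ in the sense that $2\,\mathrm{Re}(XAu,u)_H = -(Yu,u)_H$ for all $u\in D(A)$, where $Y$ is bounded, symmetric, and positive definite: $(Yu,u)_H \ge c\|u\|_H^2$ with $c>0$. Suppose additionally $\mathrm{Re}(Au,u)_H \le 0$ for $u\in D(A)$, and $(I+X)$ satisfies $\|u\|^2 \le ((I+X)u,u) \le C_X\|u\|^2$. If $u(t)$ is a classical solution of $u'(t)=Au(t)$, then $\|u(t)\|_H \le \sqrt{C_X}\, \|u(0)\|_H\, e^{-\gamma t}$ for $\gamma = \frac{c}{2 C_X} > 0$. -/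
/-- Abstract Lyapunov decay: if `X` is bounded symmetric nonnegative with
`2⟨XAu,u⟩ = -⟨Yu,u⟩` on `D(A)`, `Y` symmetric with `⟨Yu,u⟩ ≥ c‖u‖²`, `A` is
dissipative, and `‖u‖² ≤ ⟨(I+X)u,u⟩ ≤ C_X‖u‖²`, then any classical solution of
`u' = Au` satisfies `‖u(t)‖ ≤ √C_X ‖u(0)‖ e^{-γt}` with `γ = c/(2C_X)`. -/
theorem stmt_18 {H : Type*} [NormedAddCommGroup H] [InnerProductSpace ℝ H] [CompleteSpace H]
    (D : Submodule ℝ H) (hD : Dense (D : Set H))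
    (A : D →ₗ[ℝ] H) (X Y : H →L[ℝ] H) (c CX : ℝ) (hc : 0 < c) (hCX : 0 < CX)
    (hXsym : ∀ u v : H, (inner ℝ (X u) v : ℝ) = inner ℝ u (X v))
    (hXpos : ∀ u : H, (0:ℝ) ≤ inner ℝ (X u) u)
    (hYsym : ∀ u v : H, (inner ℝ (Y u) v : ℝ) = inner ℝ u (Y v))
    (hYpos : ∀ u : H, c * ‖u‖ ^ 2 ≤ (inner ℝ (Y u) u : ℝ))
    (hLyap : ∀ u : D, 2 * (inner ℝ (X (A u)) (u : H) : ℝ) = -(inner ℝ (Y (u : H)) (u : H) : ℝ))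
    (hdiss : ∀ u : D, (inner ℝ (A u) (u : H) : ℝ) ≤ 0)
    (hIX : ∀ u : H, ‖u‖ ^ 2 ≤ (inner ℝ (u + X u) u : ℝ) ∧ (inner ℝ (u + X u) u : ℝ) ≤ CX * ‖u‖ ^ 2)
    (u : ℝ → D)
    (hu : ∀ t : ℝ, 0 ≤ t → HasDerivAt (fun τ => (u τ : H)) (A (u t)) t) :
    ∀ t : ℝ, 0 ≤ t →
      ‖(u t : H)‖ ≤ Real.sqrt CX * ‖(u 0 : H)‖ * Real.exp (-(c / (2 * CX)) * t) := by
  set k : ℝ := c / CX with hk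
  have hkpos : 0 < k := div_pos hc hCX
  set E : ℝ → ℝ := fun t => (inner ℝ ((u t : H) + X (u t)) (u t : H) : ℝ) with hE
  set f : ℝ → ℝ := fun t => E t * Real.exp (k * t) with hf
  -- derivative of E at t ≥ 0
  have hE' : ∀ t : ℝ, 0 ≤ t → HasDerivAt E
      (2 * (inner ℝ (A (u t)) (u t : H) : ℝ) - (inner ℝ (Y (u t : H)) (u t : H) : ℝ)) t := by
    intro t ht
    have hv := hu t ht
    have hXv : HasDerivAt (fun τ => X ((u τ : H))) (X (A (u t))) t :=
      (X.hasFDerivAt).comp_hasDerivAt t hv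
    have h1 : HasDerivAt (fun τ => (u τ : H) + X ((u τ : H)))
        (A (u t) + X (A (u t))) t := hv.add hXv
    have h2 := h1.inner ℝ hv
    have heq : (inner ℝ ((u t : H) + X ((u t : H))) (A (u t)) : ℝ)
        + (inner ℝ (A (u t) + X (A (u t))) (u t : H) : ℝ)
        = 2 * (inner ℝ (A (u t)) (u t : H) : ℝ) - (inner ℝ (Y (u t : H)) (u t : H) : ℝ) := by
      have hL := hLyap (u t)
      have hs : (inner ℝ (X ((u t : H))) (A (u t)) : ℝ)
          = (inner ℝ (X (A (u t))) (u t : H) : ℝ) := by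
        rw [hXsym, real_inner_comm]
      simp only [inner_add_left, inner_add_right]
      rw [real_inner_comm ((u t : H)) (A (u t)), hs]
      linarith
    rw [heq] at h2
    exact h2
  have hf' : ∀ t : ℝ, 0 ≤ t → HasDerivAt f
      ((2 * (inner ℝ (A (u t)) (u t : H) : ℝ) - (inner ℝ (Y (u t : H)) (u t : H) : ℝ))
        * Real.exp (k * t) + E t * (k * Real.exp (k * t))) t := by
    intro t ht
    have hexp : HasDerivAt (fun τ => Real.exp (k * τ)) (k * Real.exp (k * t)) t := by
      convert ((hasDerivAt_id t).const_mul k).exp using 1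
      show k * Real.exp (k * t) = Real.exp (k * t) * (k * 1); ring
      rfl
    exact (hE' t ht).mul hexp
  -- f is antitone on [0, ∞)
  have hanti : AntitoneOn f (Set.Ici 0) := by
    apply antitoneOn_of_deriv_nonpos (convex_Ici 0)
    · intro t ht
      exact ((hf' t ht).continuousAt).continuousWithinAt
    · intro t ht
      rw [interior_Ici] at ht
      exact ((hf' t (le_of_lt ht)).differentiableAt).differentiableWithinAt
    · intro t ht
      rw [interior_Ici] at ht
      rw [(hf' t (le_of_lt ht)).deriv]
      have hdi := hdiss (u t)
      have hY := hYpos ((u t : H))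
      have hEb := (hIX ((u t : H))).2
      have hn : (0:ℝ) ≤ ‖(u t : H)‖ ^ 2 := by positivity
      have hexp : (0:ℝ) < Real.exp (k * t) := Real.exp_pos _
      have hsum : 2 * (inner ℝ (A (u t)) (u t : H) : ℝ)
          - (inner ℝ (Y (u t : H)) (u t : H) : ℝ) + E t * k ≤ 0 := by
        have : E t * k ≤ c * ‖(u t : H)‖ ^ 2 := by
          calc E t * k ≤ CX * ‖(u t : H)‖ ^ 2 * k :=
                mul_le_mul_of_nonneg_right hEb (le_of_lt hkpos)
            _ = c * ‖(u t : H)‖ ^ 2 := by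
                rw [hk, mul_comm, ← mul_assoc, div_mul_cancel₀ c hCX.ne']
        linarith
      nlinarith
  intro t ht
  have hft : f t ≤ f 0 := hanti (Set.self_mem_Ici) ht ht
  have h0 : f 0 = E 0 := by simp [hf]
  have hE0 : E 0 ≤ CX * ‖(u 0 : H)‖ ^ 2 := (hIX _).2
  have hEt : ‖(u t : H)‖ ^ 2 ≤ E t := (hIX _).1
  have hexp : (0:ℝ) < Real.exp (k * t) := Real.exp_pos _
  have key : ‖(u t : H)‖ ^ 2 ≤ CX * ‖(u 0 : H)‖ ^ 2 * Real.exp (-(k * t)) := by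
    rw [Real.exp_neg, ← div_eq_mul_inv, le_div_iff₀ hexp]
    calc ‖(u t : H)‖ ^ 2 * Real.exp (k * t) ≤ E t * Real.exp (k * t) :=
          mul_le_mul_of_nonneg_right hEt (le_of_lt hexp)
      _ = f t := rfl
      _ ≤ f 0 := hft
      _ = E 0 := h0
      _ ≤ CX * ‖(u 0 : H)‖ ^ 2 := hE0
  have hrhs : Real.sqrt CX * ‖(u 0 : H)‖ * Real.exp (-(c / (2 * CX)) * t)
      = Real.sqrt (CX * ‖(u 0 : H)‖ ^ 2 * Real.exp (-(k * t))) := by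
    rw [Real.sqrt_mul (by positivity), Real.sqrt_mul (le_of_lt hCX),
      Real.sqrt_sq (norm_nonneg _), ← Real.exp_half]
    congr 1
    rw [hk]
    ring
  rw [hrhs]
  calc ‖(u t : H)‖ = Real.sqrt (‖(u t : H)‖ ^ 2) := by
        rw [Real.sqrt_sq (norm_nonneg _)]
    _ ≤ Real.sqrt (CX * ‖(u 0 : H)‖ ^ 2 * Real.exp (-(k * t))) :=
        Real.sqrt_le_sqrt key
end

section
/- The operator $A u = -u'''$ with domain $D(A) = \{u \in H^3(0,L) : u(0)=0,\ u'(L)=0,\ u(L)=u''(L)\}$ on $L^2(0,L)$ has no purely imaginary eigenvalues: if $A u = i\xi u$ for some $\xi\in\mathbb R$ and $u\in D(A)$, then $u = 0$. Consequently every eigenvalue $\lambda$ of $A$ satisfies $\mathrm{Re}\,\lambda < 0$, given that $\mathrm{Re}(Au,u)_{L^2} = -|u(L)|^2 - \frac12|u'(0)|^2 \le 0$ for all $u\in D(A)$. -/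
open intervalIntegral

-- Basic derivative facts for a C³ function
lemma aux_hasDerivAt_u {u : ℝ → ℂ} (hu : ContDiff ℝ 3 u) (x : ℝ) :
    HasDerivAt u (deriv u x) x :=
  ((hu.differentiable (by norm_num)) x).hasDerivAt

lemma aux_it2 (u : ℝ → ℂ) : iteratedDeriv 2 u = deriv (deriv u) := by
  rw [show (2:ℕ) = 1+1 from rfl, iteratedDeriv_succ, iteratedDeriv_one]

lemma aux_it3 (u : ℝ → ℂ) : iteratedDeriv 3 u = deriv (deriv (deriv u)) := by
  rw [show (3:ℕ) = 2+1 from rfl, iteratedDeriv_succ, aux_it2]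

lemma aux_cd2 {u : ℝ → ℂ} (hu : ContDiff ℝ 3 u) : ContDiff ℝ 2 (deriv u) := by
  have := (contDiff_succ_iff_deriv (n := 2)).mp (by exact_mod_cast hu)
  exact this.2.2

lemma aux_cd1 {u : ℝ → ℂ} (hu : ContDiff ℝ 3 u) : ContDiff ℝ 1 (deriv (deriv u)) := by
  have := (contDiff_succ_iff_deriv (n := 1)).mp (aux_cd2 hu)
  exact this.2.2

lemma aux_hasDerivAt_d1 {u : ℝ → ℂ} (hu : ContDiff ℝ 3 u) (x : ℝ) :
    HasDerivAt (deriv u) (iteratedDeriv 2 u x) x := by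
  rw [aux_it2]
  exact (((aux_cd2 hu).differentiable (by norm_num)) x).hasDerivAt

lemma aux_hasDerivAt_d2 {u : ℝ → ℂ} (hu : ContDiff ℝ 3 u) (x : ℝ) :
    HasDerivAt (iteratedDeriv 2 u) (iteratedDeriv 3 u x) x := by
  rw [aux_it2, aux_it3]
  exact (((aux_cd1 hu).differentiable (by norm_num)) x).hasDerivAt

lemma aux_ode {L : ℝ} (hL : 0 < L) (c : ℂ) {u : ℝ → ℂ} (hu : ContDiff ℝ 3 u)
    (hode : ∀ x ∈ Set.Icc (0:ℝ) L, iteratedDeriv 3 u x = c * u x)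
    (h0 : u L = 0) (h1 : deriv u L = 0) (h2 : iteratedDeriv 2 u L = 0) :
    ∀ x ∈ Set.Icc (0:ℝ) L, u x = 0 := by
  set T : (ℂ × ℂ × ℂ) →L[ℝ] (ℂ × ℂ × ℂ) :=
    ((ContinuousLinearMap.fst ℝ ℂ ℂ).comp (ContinuousLinearMap.snd ℝ ℂ (ℂ × ℂ))).prod
      ((((ContinuousLinearMap.snd ℝ ℂ ℂ).comp (ContinuousLinearMap.snd ℝ ℂ (ℂ × ℂ))).prod
        ((c • (ContinuousLinearMap.id ℝ ℂ)).comp (ContinuousLinearMap.fst ℝ ℂ (ℂ × ℂ))))) with hT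
  have hTapp : ∀ p : ℂ × ℂ × ℂ, T p = (p.2.1, p.2.2, c * p.1) := fun p => rfl
  set f : ℝ → ℂ × ℂ × ℂ := fun t => (u t, deriv u t, iteratedDeriv 2 u t) with hf
  have hfcont : ContinuousOn f (Set.Icc 0 L) := by
    apply Continuous.continuousOn
    exact ((hu.continuous).prodMk (((aux_cd2 hu).continuous).prodMk
      (by rw [aux_it2]; exact (aux_cd1 hu).continuous)))
  have hf' : ∀ t ∈ Set.Ioc (0:ℝ) L, HasDerivWithinAt f (T (f t)) (Set.Iic t) t := by
    intro t ht
    have hd : HasDerivAt f (deriv u t, iteratedDeriv 2 u t, iteratedDeriv 3 u t) t :=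
      (aux_hasDerivAt_u hu t).prodMk ((aux_hasDerivAt_d1 hu t).prodMk (aux_hasDerivAt_d2 hu t))
    rw [hTapp]
    have : iteratedDeriv 3 u t = c * u t := hode t ⟨ht.1.le, ht.2⟩
    rw [← this]
    exact hd.hasDerivWithinAt
  have hv : ∀ t : ℝ, LipschitzOnWith ‖T‖₊ (⇑T) (Set.univ : Set (ℂ × ℂ × ℂ)) :=
    fun _ => T.lipschitz.lipschitzOnWith
  have hg' : ∀ t ∈ Set.Ioc (0:ℝ) L,
      HasDerivWithinAt (fun _ : ℝ => (0 : ℂ × ℂ × ℂ)) (T 0) (Set.Iic t) t := by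
    intro t _
    rw [map_zero]
    exact hasDerivWithinAt_const t _ 0
  have key := ODE_solution_unique_of_mem_Icc_left (v := fun _ => ⇑T)
    (s := fun _ => Set.univ) (K := ‖T‖₊) (f := f) (g := fun _ => 0) (a := 0) (b := L)
    (fun t _ => hv t) hfcont hf' (fun _ _ => trivial)
    continuousOn_const hg'
    (fun _ _ => trivial) (by simp [hf, h0, h1, h2])
  intro x hx
  have := key hx
  simpa [hf, Prod.ext_iff] using congrArg Prod.fst this

lemma aux_energy {L : ℝ} (hL : 0 < L) (ξ : ℝ) {u : ℝ → ℂ} (hu : ContDiff ℝ 3 u)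
    (h0 : u 0 = 0) (h1 : deriv u L = 0) (h2 : u L = iteratedDeriv 2 u L)
    (hode : ∀ x ∈ Set.Icc (0:ℝ) L, -(iteratedDeriv 3 u x) = (Complex.I * ξ) * u x) :
    u L = 0 ∧ deriv u 0 = 0 := by
  set W : ℝ → ℂ := fun x => iteratedDeriv 2 u x * (starRingEnd ℂ) (u x)
      - (1/2 : ℂ) * (deriv u x * (starRingEnd ℂ) (deriv u x)) with hW
  set w : ℝ → ℝ := fun x => (W x).re with hw
  have hWd : ∀ x : ℝ, HasDerivAt W
      (iteratedDeriv 3 u x * (starRingEnd ℂ) (u x)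
        + iteratedDeriv 2 u x * (starRingEnd ℂ) (deriv u x)
        - (1/2 : ℂ) * (iteratedDeriv 2 u x * (starRingEnd ℂ) (deriv u x)
            + deriv u x * (starRingEnd ℂ) (iteratedDeriv 2 u x))) x := by
    intro x
    have hcu : HasDerivAt (fun y => (starRingEnd ℂ) (u y)) ((starRingEnd ℂ) (deriv u x)) x := by
      simpa [Complex.star_def] using (aux_hasDerivAt_u hu x).star
    have hcd : HasDerivAt (fun y => (starRingEnd ℂ) (deriv u y))
        ((starRingEnd ℂ) (iteratedDeriv 2 u x)) x := by
      simpa [Complex.star_def] using (aux_hasDerivAt_d1 hu x).star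
    exact ((aux_hasDerivAt_d2 hu x).mul hcu).sub
      (((aux_hasDerivAt_d1 hu x).mul hcd).const_mul (1/2 : ℂ))
  have hwd : ∀ x ∈ Set.Ico (0:ℝ) L, HasDerivWithinAt w 0 (Set.Ici x) x := by
    intro x hx
    have h3 : iteratedDeriv 3 u x = -(Complex.I * ξ * u x) := by
      have := hode x ⟨hx.1, hx.2.le⟩; linear_combination -this
    have hd : HasDerivAt w ((iteratedDeriv 3 u x * (starRingEnd ℂ) (u x)
        + iteratedDeriv 2 u x * (starRingEnd ℂ) (deriv u x)
        - (1/2 : ℂ) * (iteratedDeriv 2 u x * (starRingEnd ℂ) (deriv u x)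
            + deriv u x * (starRingEnd ℂ) (iteratedDeriv 2 u x))).re) x :=
      Complex.reCLM.hasFDerivAt.comp_hasDerivAt x (hWd x)
    have hz : (iteratedDeriv 3 u x * (starRingEnd ℂ) (u x)
        + iteratedDeriv 2 u x * (starRingEnd ℂ) (deriv u x)
        - (1/2 : ℂ) * (iteratedDeriv 2 u x * (starRingEnd ℂ) (deriv u x)
            + deriv u x * (starRingEnd ℂ) (iteratedDeriv 2 u x))).re = 0 := by
      rw [h3]
      simp [Complex.mul_re, Complex.mul_im, Complex.add_re, Complex.sub_re,
        Complex.conj_re, Complex.conj_im, Complex.mul_conj]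
      ring
    rw [← hz]
    exact hd.hasDerivWithinAt
  have hc2 : Continuous (iteratedDeriv 2 u) := by
    rw [aux_it2]; exact (aux_cd1 hu).continuous
  have hc1 : Continuous (deriv u) := (aux_cd2 hu).continuous
  have hWcont : Continuous W := by
    apply Continuous.sub
    · exact hc2.mul (hu.continuous.star)
    · exact continuous_const.mul (hc1.mul hc1.star)
  have hwcont : ContinuousOn w (Set.Icc 0 L) :=
    (Complex.continuous_re.comp hWcont).continuousOn
  have hconst := constant_of_has_deriv_right_zero hwcont hwd L
    (Set.right_mem_Icc.mpr hL.le)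
  have hwL : w L = Complex.normSq (u L) := by
    simp [hw, hW, h1, ← h2, Complex.mul_conj, Complex.normSq_apply]
  have hw0 : w 0 = -(1/2) * Complex.normSq (deriv u 0) := by
    simp only [hw, hW, h0, Complex.normSq_apply, map_zero, mul_zero, zero_mul,
      zero_sub, Complex.neg_re, Complex.mul_re, Complex.conj_re, Complex.conj_im]
    norm_num [Complex.mul_im]
  rw [hwL, hw0] at hconst
  have hA := Complex.normSq_nonneg (u L)
  have hB := Complex.normSq_nonneg (deriv u 0)
  constructor
  · exact Complex.normSq_eq_zero.mp (by linarith)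
  · exact Complex.normSq_eq_zero.mp (by linarith)

lemma aux_part1 {L : ℝ} (hL : 0 < L) (u : ℝ → ℂ) (ξ : ℝ) (hu : ContDiff ℝ 3 u)
    (h0 : u 0 = 0) (h1 : deriv u L = 0) (h2 : u L = iteratedDeriv 2 u L)
    (hode : ∀ x ∈ Set.Icc (0:ℝ) L, -(iteratedDeriv 3 u x) = (Complex.I * ξ) * u x) :
    ∀ x ∈ Set.Icc (0:ℝ) L, u x = 0 := by
  obtain ⟨huL, -⟩ := aux_energy hL ξ hu h0 h1 h2 hode
  have h3 : ∀ x ∈ Set.Icc (0:ℝ) L, iteratedDeriv 3 u x = (-(Complex.I * ξ)) * u x := by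
    intro x hx; linear_combination -(hode x hx)
  exact aux_ode hL _ hu h3 huL h1 (by rw [← h2, huL])

/-- The operator `Au = -u'''` with domain conditions `u(0)=0`, `u'(L)=0`,
`u(L)=u''(L)` has no purely imaginary eigenvalues; consequently, given the
identity `Re(Au,u) = -|u(L)|² - ½|u'(0)|²` on the domain, every eigenvalue has
negative real part. -/
theorem stmt_19 (L : ℝ) (hL : 0 < L) :
    (∀ (u : ℝ → ℂ) (ξ : ℝ), ContDiff ℝ 3 u → u 0 = 0 → deriv u L = 0 →
      u L = iteratedDeriv 2 u L →
      (∀ x ∈ Set.Icc (0:ℝ) L, -(iteratedDeriv 3 u x) = (Complex.I * ξ) * u x) →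
      ∀ x ∈ Set.Icc (0:ℝ) L, u x = 0) ∧
    (∀ (u : ℝ → ℂ) (lam : ℂ), ContDiff ℝ 3 u → u 0 = 0 → deriv u L = 0 →
      u L = iteratedDeriv 2 u L →
      (∀ x ∈ Set.Icc (0:ℝ) L, -(iteratedDeriv 3 u x) = lam * u x) →
      (∃ x ∈ Set.Icc (0:ℝ) L, u x ≠ 0) →
      (∀ v : ℝ → ℂ, ContDiff ℝ 3 v → v 0 = 0 → deriv v L = 0 →
        v L = iteratedDeriv 2 v L →
        (∫ x in (0:ℝ)..L, -(iteratedDeriv 3 v x) * (starRingEnd ℂ) (v x)).re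
          = -(‖v L‖) ^ 2 - (1/2) * (‖deriv v 0‖) ^ 2) →
      lam.re < 0) := by
  constructor
  · exact fun u ξ hu h0 h1 h2 hode => aux_part1 hL u ξ hu h0 h1 h2 hode
  · intro u lam hu h0 h1 h2 hode hne hid
    have hident := hid u hu h0 h1 h2
    -- rewrite the integral
    have hcongr : (∫ x in (0:ℝ)..L, -(iteratedDeriv 3 u x) * (starRingEnd ℂ) (u x))
        = ∫ x in (0:ℝ)..L, lam * ((Complex.normSq (u x) : ℝ) : ℂ) := by
      apply intervalIntegral.integral_congr
      intro x hx
      rw [Set.uIcc_of_le hL.le] at hx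
      show -(iteratedDeriv 3 u x) * (starRingEnd ℂ) (u x) = lam * ((Complex.normSq (u x) : ℝ) : ℂ)
      rw [hode x hx, mul_assoc, Complex.mul_conj]
    have hof : (∫ x in (0:ℝ)..L, lam * ((Complex.normSq (u x) : ℝ) : ℂ))
        = lam * ((∫ x in (0:ℝ)..L, Complex.normSq (u x) : ℝ) : ℂ) := by
      rw [intervalIntegral.integral_const_mul, intervalIntegral.integral_ofReal]
    set r : ℝ := ∫ x in (0:ℝ)..L, Complex.normSq (u x) with hr
    have hrnn : 0 ≤ r := by
      apply intervalIntegral.integral_nonneg hL.le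
      exact fun x _ => Complex.normSq_nonneg _
    have hkey : lam.re * r = -(‖u L‖) ^ 2
        - (1/2) * (‖deriv u 0‖) ^ 2 := by
      rw [hcongr, hof] at hident
      simpa [Complex.mul_re] using hident
    rcases lt_trichotomy lam.re 0 with hc | hc | hc
    · exact hc
    · exfalso
      have hlam : lam = Complex.I * (lam.im : ℂ) := by
        apply Complex.ext <;> simp [hc]
      obtain ⟨x, hx, hxne⟩ := hne
      exact hxne (aux_part1 hL u lam.im hu h0 h1 h2 (fun y hy => by
        rw [← hlam]; exact hode y hy) x hx)
    · exfalso
      have hnn : 0 ≤ lam.re * r := mul_nonneg hc.le hrnn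
      have hA : (0:ℝ) ≤ (‖u L‖) ^ 2 := sq_nonneg _
      have hB : (0:ℝ) ≤ (‖deriv u 0‖) ^ 2 := sq_nonneg _
      have huL : u L = 0 := by
        have : ‖u L‖ = 0 := by nlinarith
        exact norm_eq_zero.mp this
      have h3 : ∀ x ∈ Set.Icc (0:ℝ) L, iteratedDeriv 3 u x = (-lam) * u x := by
        intro x hx; linear_combination -(hode x hx)
      obtain ⟨x, hx, hxne⟩ := hne
      exact hxne (aux_ode hL (-lam) hu h3 huL h1 (by rw [← h2, huL]) x hx)
end
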